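/- The class of languages over a fixed alphabet Σ recognized by finite idempotent commutative monoids (semilattices) is exactly the Boolean algebra generated by the languages Σ*aΣ* for a ∈ Σ. -/

import Mathlib

/-- Membership in the Boolean algebra generated by a family G of subsets of X:
closure under finite unions (including the empty union), finite intersections
and complement. -/
inductive GenBoolAlg {X : Type*} (G : Set (Set X)) : Set X → Prop
  | basic {s : Set X} : s ∈ G → GenBoolAlg G s
  | empty : GenBoolAlg G ∅
  | union {s t : Set X} : GenBoolAlg G s → GenBoolAlg G t → GenBoolAlg G (s ∪ t)
  | inter {s t : Set X} : GenBoolAlg G s → GenBoolAlg G t → GenBoolAlg G (s ∩ t)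
  | compl {s : Set X} : GenBoolAlg G s → GenBoolAlg G sᶜ

theorem GenBoolAlg.univ' {X : Type*} {G : Set (Set X)} :
    GenBoolAlg G (Set.univ : Set X) := by
  rw [← Set.compl_empty]; exact .compl .empty

theorem GenBoolAlg.biInter {X ι : Type*} {G : Set (Set X)} (s : Finset ι) (f : ι → Set X)
    (h : ∀ i ∈ s, GenBoolAlg G (f i)) : GenBoolAlg G (⋂ i ∈ s, f i) := by
  classical
  induction s using Finset.induction with
  | empty => simpa using GenBoolAlg.univ'
  | @insert a s hni ih =>
      rw [Finset.set_biInter_insert]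
      exact .inter (h _ (Finset.mem_insert_self _ _))
        (ih fun i hi => h i (Finset.mem_insert_of_mem hi))

theorem GenBoolAlg.biUnion {X ι : Type*} {G : Set (Set X)} (s : Finset ι) (f : ι → Set X)
    (h : ∀ i ∈ s, GenBoolAlg G (f i)) : GenBoolAlg G (⋃ i ∈ s, f i) := by
  classical
  induction s using Finset.induction with
  | empty => simpa using GenBoolAlg.empty
  | @insert a s hni ih =>
      rw [Finset.set_biUnion_insert]
      exact .union (h _ (Finset.mem_insert_self _ _))
        (ih fun i hi => h i (Finset.mem_insert_of_mem hi))

/-- Bool with `or` as a commutative monoid. -/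
def BOr : Type := Bool

instance : CommMonoid BOr where
  mul a b := (Bool.or a b : Bool)
  one := (false : Bool)
  mul_assoc a b c := by
    show Bool.or (Bool.or a b) c = Bool.or a (Bool.or b c)
    cases a <;> cases b <;> cases c <;> rfl
  one_mul a := by show Bool.or false a = a; cases a <;> rfl
  mul_one a := by show Bool.or a false = a; cases a <;> rfl
  mul_comm a b := by
    show Bool.or a b = Bool.or b a
    cases a <;> cases b <;> rfl

instance : Finite BOr := inferInstanceAs (Finite Bool)

theorem BOr.idem (x : BOr) : x * x = x := by
  show Bool.or x x = x; cases x <;> rfl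

theorem BOr.prod_eq_true (l : List BOr) :
    l.prod = (true : Bool) ↔ (true : Bool) ∈ l := by
  induction l with
  | nil =>
      simp only [List.prod_nil, List.not_mem_nil, iff_false]
      exact ⟨fun h => Bool.noConfusion h, fun h => nomatch h⟩
  | cons b l ih =>
      rw [List.prod_cons]
      show Bool.or b l.prod = true ↔ _
      cases b
      · exact ih.trans ⟨fun h => List.Mem.tail _ h, fun h => by cases h; assumption⟩
      · exact ⟨fun _ => List.Mem.head _, fun _ => rfl⟩

theorem prod_toFinset {α M : Type*} [CommMonoid M] [DecidableEq α]
    (hid : ∀ x : M, x * x = x) (ρ : FreeMonoid α →* M) (l : List α) :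
    ρ (FreeMonoid.ofList l) = ∏ a ∈ l.toFinset, ρ (FreeMonoid.of a) := by
  induction l with
  | nil => simp [FreeMonoid.ofList_nil]
  | cons a l ih =>
      rw [FreeMonoid.ofList_cons, map_mul, ih, List.toFinset_cons]
      by_cases h : a ∈ l.toFinset
      · rw [Finset.insert_eq_self.mpr h, ← Finset.mul_prod_erase _ _ h, ← mul_assoc, hid]
      · rw [Finset.prod_insert h]

/-- The languages over a fixed finite alphabet Σ recognized by finite
idempotent commutative monoids (semilattices) are exactly the Boolean algebra
generated by the languages Σ*aΣ* for a ∈ Σ. -/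
theorem stmt_16 (α : Type) [Finite α] (L : Set (FreeMonoid α)) :
    (∃ (M : Type) (_ : CommMonoid M) (_ : Finite M),
        (∀ x : M, x * x = x) ∧
        ∃ (ρ : FreeMonoid α →* M) (F : Set M), L = ρ ⁻¹' F) ↔
    GenBoolAlg {S : Set (FreeMonoid α) |
        ∃ a : α, S = {w : FreeMonoid α | a ∈ FreeMonoid.toList w}} L := by
  classical
  haveI := Fintype.ofFinite α
  constructor
  · rintro ⟨M, _, _, hid, ρ, F, rfl⟩
    have key : ρ ⁻¹' F =
        ⋃ s ∈ Finset.univ.filter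
          (fun s : Finset α => (∏ a ∈ s, ρ (FreeMonoid.of a)) ∈ F),
          {w : FreeMonoid α | (FreeMonoid.toList w).toFinset = s} := by
      ext w
      simp only [Set.mem_preimage, Set.mem_iUnion, Set.mem_setOf_eq,
        Finset.mem_filter, Finset.mem_univ, true_and]
      constructor
      · intro hw
        refine ⟨(FreeMonoid.toList w).toFinset, ?_, rfl⟩
        rw [← prod_toFinset hid ρ (FreeMonoid.toList w), FreeMonoid.ofList_toList]
        exact hw
      · rintro ⟨s, hs, hws⟩
        have := prod_toFinset hid ρ (FreeMonoid.toList w)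
        rw [FreeMonoid.ofList_toList, hws] at this
        rw [this]; exact hs
    rw [key]
    apply GenBoolAlg.biUnion
    intro s _
    have hEs : {w : FreeMonoid α | (FreeMonoid.toList w).toFinset = s} =
        (⋂ a ∈ s, {w : FreeMonoid α | a ∈ FreeMonoid.toList w}) ∩
        (⋂ a ∈ sᶜ, {w : FreeMonoid α | a ∈ FreeMonoid.toList w}ᶜ) := by
      ext w
      simp only [Set.mem_setOf_eq, Set.mem_inter_iff, Set.mem_iInter,
        Set.mem_compl_iff, Finset.mem_compl, Finset.ext_iff, List.mem_toFinset]
      constructor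
      · intro h; exact ⟨fun a ha => (h a).mpr ha, fun a ha hw => ha ((h a).mp hw)⟩
      · intro ⟨h1, h2⟩ a
        constructor
        · intro hw; by_contra ha; exact h2 a ha hw
        · exact h1 a
    rw [hEs]
    exact .inter
      (GenBoolAlg.biInter _ _ fun a _ => .basic ⟨a, rfl⟩)
      (GenBoolAlg.biInter _ _ fun a _ => .compl (.basic ⟨a, rfl⟩))
  · intro h
    induction h with
    | @basic s hs =>
        obtain ⟨a, rfl⟩ := hs
        refine ⟨BOr, inferInstance, inferInstance, BOr.idem,
          FreeMonoid.lift (fun b => if b = a then (true : Bool) else (false : Bool)),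
          {x : BOr | x = (true : Bool)}, ?_⟩
        ext w
        simp only [Set.mem_setOf_eq, Set.mem_preimage, FreeMonoid.lift_apply]
        rw [BOr.prod_eq_true]; erw [List.mem_map]
        constructor
        · intro hw; exact ⟨a, hw, if_pos rfl⟩
        · rintro ⟨b, hb, hfb⟩
          by_cases hba : b = a
          · exact hba ▸ hb
          · erw [if_neg hba] at hfb; exact absurd hfb (fun h => Bool.noConfusion h)
    | empty =>
        exact ⟨PUnit, inferInstance, inferInstance, fun x => rfl, 1, ∅, by simp⟩
    | @union s t _ _ ihs iht =>
        obtain ⟨M₁, i₁, f₁, hid₁, ρ₁, F₁, rfl⟩ := ihs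
        obtain ⟨M₂, i₂, f₂, hid₂, ρ₂, F₂, rfl⟩ := iht
        refine ⟨M₁ × M₂, inferInstance, inferInstance,
          fun x => Prod.ext (hid₁ x.1) (hid₂ x.2), ρ₁.prod ρ₂,
          (F₁ ×ˢ Set.univ) ∪ (Set.univ ×ˢ F₂), ?_⟩
        ext w
        simp [MonoidHom.prod_apply, Set.mem_prod]
    | @inter s t _ _ ihs iht =>
        obtain ⟨M₁, i₁, f₁, hid₁, ρ₁, F₁, rfl⟩ := ihs
        obtain ⟨M₂, i₂, f₂, hid₂, ρ₂, F₂, rfl⟩ := iht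
        refine ⟨M₁ × M₂, inferInstance, inferInstance,
          fun x => Prod.ext (hid₁ x.1) (hid₂ x.2), ρ₁.prod ρ₂, F₁ ×ˢ F₂, ?_⟩
        ext w
        simp [MonoidHom.prod_apply, Set.mem_prod]
    | @compl s _ ih =>
        obtain ⟨M, i, f, hid, ρ, F, rfl⟩ := ih
        exact ⟨M, i, f, hid, ρ, Fᶜ, by simp⟩
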